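/- Let K be a real number with 0 < K < 1. Let (λ,μ) ∈ Θ, let (α,β) ∈ Ω_{λ,μ}, and let α', β' be real numbers such that (i) |αβ - K/(λ+μ-1)|/(1-μ) < |β'| < 1-λ and (ii) α' = (αβ - K/(λ+μ-1))/β'. Define a = (λ+β)/2, b = (1-λ-β')/2, c = (1-λ+β')/2, d = (λ-β)/2, e = (1-μ-α')/2, f = (μ+α)/2, g = (μ-α)/2, h = (1-μ+α')/2, and let A be the 4×4 matrix with rows (a,b,c,d), (e,f,g,h), (h,g,f,e), (d,c,b,a). Then A is a strictly stochastic strand symmetric matrix with det(A) = K, with a + d + f + g > 1, b ≠ c, and f > g. -/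

import Mathlib

/-- The polynomial `r_K(z) = z³ + z - 2K`. -/
def rK (K z : ℝ) : ℝ := z ^ 3 + z - 2 * K

/-- The set `Θ` of pairs `(λ,μ) ∈ (0,1)²` with `ν₀ + 1 ≤ λ + μ < 2` and
`|λ - μ| < min { 2 - λ - μ, √(r_K(λ+μ-1)/(λ+μ-1)) }`. -/
noncomputable def Theta (K ν : ℝ) : Set (ℝ × ℝ) :=
  {p | p.1 ∈ Set.Ioo (0 : ℝ) 1 ∧ p.2 ∈ Set.Ioo (0 : ℝ) 1 ∧
    ν + 1 ≤ p.1 + p.2 ∧ p.1 + p.2 < 2 ∧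
    |p.1 - p.2| <
      min (2 - p.1 - p.2) (Real.sqrt (rK K (p.1 + p.2 - 1) / (p.1 + p.2 - 1)))}

/-- The set `Ω_{λ,μ}`. -/
noncomputable def OmegaLM (K lam mu : ℝ) : Set (ℝ × ℝ) :=
  {p | 0 < p.1 ∧ p.1 < mu ∧ |p.2| < lam ∧
    |p.1 * p.2 - K / (lam + mu - 1)| < (1 - lam) * (1 - mu)}

set_option maxHeartbeats 1000000 in
private lemma my_det_fin_four (M : Matrix (Fin 4) (Fin 4) ℝ) :
    M.det =
      M 0 0 * M 1 1 * M 2 2 * M 3 3 - M 0 0 * M 1 1 * M 2 3 * M 3 2 -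
        M 0 0 * M 1 2 * M 2 1 * M 3 3 + M 0 0 * M 1 2 * M 2 3 * M 3 1 +
        M 0 0 * M 1 3 * M 2 1 * M 3 2 - M 0 0 * M 1 3 * M 2 2 * M 3 1 -
        M 0 1 * M 1 0 * M 2 2 * M 3 3 + M 0 1 * M 1 0 * M 2 3 * M 3 2 +
        M 0 1 * M 1 2 * M 2 0 * M 3 3 - M 0 1 * M 1 2 * M 2 3 * M 3 0 -
        M 0 1 * M 1 3 * M 2 0 * M 3 2 + M 0 1 * M 1 3 * M 2 2 * M 3 0 +
        M 0 2 * M 1 0 * M 2 1 * M 3 3 - M 0 2 * M 1 0 * M 2 3 * M 3 1 -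
        M 0 2 * M 1 1 * M 2 0 * M 3 3 + M 0 2 * M 1 1 * M 2 3 * M 3 0 +
        M 0 2 * M 1 3 * M 2 0 * M 3 1 - M 0 2 * M 1 3 * M 2 1 * M 3 0 -
        M 0 3 * M 1 0 * M 2 1 * M 3 2 + M 0 3 * M 1 0 * M 2 2 * M 3 1 +
        M 0 3 * M 1 1 * M 2 0 * M 3 2 - M 0 3 * M 1 1 * M 2 2 * M 3 0 -
        M 0 3 * M 1 2 * M 2 0 * M 3 1 + M 0 3 * M 1 2 * M 2 1 * M 3 0 := by
  simp [Matrix.det_succ_row_zero, Fin.sum_univ_succ]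
  simp only [show (Fin.succ 2 : Fin 4) = 3 from rfl,
    show (1 : Fin 4).succAbove 2 = 3 from rfl,
    show (2 : Fin 4).succAbove 2 = 3 from rfl,
    show (3 : Fin 4).succAbove 2 = 2 from rfl,
    show (Fin.castSucc (2 : Fin 3) : Fin 4) = 2 from rfl]
  ring

theorem stmt_17 (K : ℝ) (hK0 : 0 < K) (hK1 : K < 1) (ν : ℝ)
    (hν : 0 < ν ∧ rK K ν = 0)
    (hνu : ∀ t : ℝ, 0 < t → rK K t = 0 → t = ν)
    (lam mu : ℝ) (hTheta : (lam, mu) ∈ Theta K ν)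
    (al be : ℝ) (hOmega : (al, be) ∈ OmegaLM K lam mu)
    (al' be' : ℝ)
    (hbe' : |al * be - K / (lam + mu - 1)| / (1 - mu) < |be'| ∧ |be'| < 1 - lam)
    (hal' : al' = (al * be - K / (lam + mu - 1)) / be')
    (a b c d e f g h : ℝ)
    (ha : a = (lam + be) / 2) (hb : b = (1 - lam - be') / 2)
    (hc : c = (1 - lam + be') / 2) (hd : d = (lam - be) / 2)
    (he : e = (1 - mu - al') / 2) (hf : f = (mu + al) / 2)
    (hg : g = (mu - al) / 2) (hh : h = (1 - mu + al') / 2)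
    (A : Matrix (Fin 4) (Fin 4) ℝ)
    (hA : A = !![a, b, c, d; e, f, g, h; h, g, f, e; d, c, b, a]) :
    (∀ i j, 0 < A i j) ∧ (∀ i, ∑ j, A i j = 1) ∧ A.det = K ∧
      1 < a + d + f + g ∧ b ≠ c ∧ g < f := by

  obtain ⟨⟨hl0, hl1⟩, ⟨hm0, hm1⟩, hsum, hsum2, habs⟩ := hTheta
  obtain ⟨hal0, halmu, hbelam, hX⟩ := hOmega
  simp only at hl0 hl1 hm0 hm1 hsum hsum2 habs hal0 halmu hbelam hX
  have hlm1 : 1 < lam + mu := by nlinarith [hν.1]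
  have hlmne : lam + mu - 1 ≠ 0 := by linarith
  set X : ℝ := al * be - K / (lam + mu - 1) with hXdef
  have hbe'pos : 0 < |be'| := lt_of_le_of_lt (div_nonneg (abs_nonneg _) (by linarith)) hbe'.1
  have hbe'ne : be' ≠ 0 := by
    intro hcon; rw [hcon, abs_zero] at hbe'pos; exact lt_irrefl 0 hbe'pos
  have hprod : al' * be' = X := by
    rw [hal']; field_simp
  have hal'abs : |al'| < 1 - mu := by
    have h1 : |X| < (1 - mu) * |be'| := by
      have := hbe'.1
      rw [div_lt_iff₀ (by linarith : (0:ℝ) < 1 - mu)] at this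
      linarith [mul_comm (1 - mu) |be'|, this]
    have : |al'| * |be'| < (1 - mu) * |be'| := by
      rw [← abs_mul, hprod]; exact h1
    exact lt_of_mul_lt_mul_right this (le_of_lt hbe'pos)
  obtain ⟨hbe1, hbe2⟩ := abs_lt.mp hbelam
  obtain ⟨hbp1, hbp2⟩ := abs_lt.mp hbe'.2
  obtain ⟨hap1, hap2⟩ := abs_lt.mp hal'abs
  have hapos : 0 < a := by rw [ha]; linarith
  have hbpos : 0 < b := by rw [hb]; linarith
  have hcpos : 0 < c := by rw [hc]; linarith
  have hdpos : 0 < d := by rw [hd]; linarith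
  have hepos : 0 < e := by rw [he]; linarith
  have hfpos : 0 < f := by rw [hf]; linarith
  have hgpos : 0 < g := by rw [hg]; linarith
  have hhpos : 0 < h := by rw [hh]; linarith
  refine ⟨?_, ?_, ?_, ?_, ?_, ?_⟩
  · intro i j
    subst hA
    fin_cases i <;> fin_cases j <;>
      simp [Matrix.cons_val_zero, Matrix.cons_val_one] <;> assumption
  · intro i
    subst hA
    fin_cases i <;>
      simp [Fin.sum_univ_four, Matrix.cons_val_zero, Matrix.cons_val_one] <;>
      · subst ha hb hc hd he hf hg hh; ring
  · subst hA
    rw [my_det_fin_four]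
    have key : (lam + mu - 1) * (al * be - al' * be') = K := by
      rw [hprod, hXdef]
      field_simp
      ring
    subst ha hb hc hd he hf hg hh
    simp only [Matrix.of_apply, Matrix.cons_val', Matrix.cons_val_zero,
      Matrix.cons_val_one, Matrix.head_cons, Matrix.empty_val',
      Matrix.cons_val_fin_one, Matrix.head_fin_const, Matrix.cons_val_two,
      Matrix.cons_val_three, Matrix.tail_cons]
    linear_combination key
  · have : a + d = lam := by rw [ha, hd]; ring
    have h2 : f + g = mu := by rw [hf, hg]; ring
    linarith
  · have : c - b = be' := by rw [hb, hc]; ring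
    intro hcon
    apply hbe'ne
    rw [hcon] at this
    linarith
  · rw [hf, hg]; linarith
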